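/- In the l¹ or l∞ operator norm, the bound K₄ := (1/2^ℓ) Σ_{subsets {r₁<⋯<r_n} of {1,…,ℓ}} ‖W_{(ℓ+1,r_n)}^abs W_{(r_n,r_{n-1})}^abs ⋯ W_{(r₂,r₁)}^abs W_{(r₁,0)}^abs‖ satisfies K ≤ K₄ ≤ K₁, where K is the maximum of ‖W_ℓ D_ℓ ⋯ D₁ W₀‖ over diagonal D_r with entries in [0,1] and K₁ is the Combettes–Pesquet bound. -/

import Mathlib

/-- The l¹ operator norm of a matrix: maximum absolute column sum. -/
noncomputable def l1N {m n : ℕ} (A : Matrix (Fin m) (Fin n) ℝ) : ℝ :=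
  ⨆ j, ∑ i, |A i j|

/-- The l∞ operator norm of a matrix: maximum absolute row sum. -/
noncomputable def linfN {m n : ℕ} (A : Matrix (Fin m) (Fin n) ℝ) : ℝ :=
  ⨆ i, ∑ j, |A i j|

/-- Entrywise absolute value of a matrix. -/
def entAbs {m n : ℕ} (A : Matrix (Fin m) (Fin n) ℝ) : Matrix (Fin m) (Fin n) ℝ :=
  fun i j => |A i j|

/-- The chunk product `W (s+k) * ⋯ * W (s+1) * W s`. -/
def Wchunk (a : ℕ → ℕ) (W : ∀ r : ℕ, Matrix (Fin (a (r+1))) (Fin (a r)) ℝ) (s : ℕ) :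
    (k : ℕ) → Matrix (Fin (a (s + k + 1))) (Fin (a s)) ℝ
  | 0 => W s
  | k+1 => W (s + k + 1) * Wchunk a W s k

/-- The chunk product `W_{(t,s)} = W (t-1) * ⋯ * W s` for `s < t`, cast to its natural type. -/
def Wts (a : ℕ → ℕ) (W : ∀ r : ℕ, Matrix (Fin (a (r+1))) (Fin (a r)) ℝ) (s t : ℕ) :
    Matrix (Fin (a t)) (Fin (a s)) ℝ :=
  if h : s < t then
    (Wchunk a W s (t - s - 1)).submatrix
      (Fin.cast (congrArg a (by omega : t = s + (t - s - 1) + 1))) id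
  else 0

/-- Given a decreasing list `[r_n, …, r_1]` of cut points, the product
`nn (W_{(t,r_n)}) * nn (W_{(r_n,r_{n-1})}) * ⋯ * nn (W_{(r_1,0)})` of chunk norms. -/
noncomputable def chunkNormProd (a : ℕ → ℕ)
    (W : ∀ r : ℕ, Matrix (Fin (a (r+1))) (Fin (a r)) ℝ)
    (nn : ∀ m n : ℕ, Matrix (Fin m) (Fin n) ℝ → ℝ) : ℕ → List ℕ → ℝ
  | t, [] => nn (a t) (a 0) (Wts a W 0 t)
  | t, r :: rest => nn (a t) (a r) (Wts a W r t) * chunkNormProd a W nn r rest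

/-- The Combettes–Pesquet bound `K₁`, for the norm `nn`. -/
noncomputable def K1 (a : ℕ → ℕ) (W : ∀ r : ℕ, Matrix (Fin (a (r+1))) (Fin (a r)) ℝ)
    (nn : ∀ m n : ℕ, Matrix (Fin m) (Fin n) ℝ → ℝ) (ℓ : ℕ) : ℝ :=
  (1 / 2 ^ ℓ) * ∑ S ∈ (Finset.Icc 1 ℓ).powerset,
    chunkNormProd a W nn (ℓ + 1) ((S.sort (· ≤ ·)).reverse)

/-- Given a decreasing list `[r_n, …, r_1]` of cut points, the matrix product
`W_{(t,r_n)}^abs * W_{(r_n,r_{n-1})}^abs * ⋯ * W_{(r_1,0)}^abs`. -/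
noncomputable def chunkAbsProd (a : ℕ → ℕ)
    (W : ∀ r : ℕ, Matrix (Fin (a (r+1))) (Fin (a r)) ℝ) :
    (t : ℕ) → List ℕ → Matrix (Fin (a t)) (Fin (a 0)) ℝ
  | t, [] => entAbs (Wts a W 0 t)
  | t, r :: rest => entAbs (Wts a W r t) * chunkAbsProd a W r rest

/-- The bound `K₄`, for the norm `nn`. -/
noncomputable def K4 (a : ℕ → ℕ) (W : ∀ r : ℕ, Matrix (Fin (a (r+1))) (Fin (a r)) ℝ)
    (nn : ∀ m n : ℕ, Matrix (Fin m) (Fin n) ℝ → ℝ) (ℓ : ℕ) : ℝ :=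
  (1 / 2 ^ ℓ) * ∑ S ∈ (Finset.Icc 1 ℓ).powerset,
    nn (a (ℓ+1)) (a 0) (chunkAbsProd a W (ℓ + 1) ((S.sort (· ≤ ·)).reverse))

/-- The product `W ℓ * D ℓ * W (ℓ-1) * D (ℓ-1) * ⋯ * D 1 * W 0`. -/
def chainWD (a : ℕ → ℕ) (W : ∀ r : ℕ, Matrix (Fin (a (r+1))) (Fin (a r)) ℝ)
    (D : ∀ r : ℕ, Matrix (Fin (a r)) (Fin (a r)) ℝ) :
    (k : ℕ) → Matrix (Fin (a (k+1))) (Fin (a 0)) ℝ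
  | 0 => W 0
  | k+1 => W (k+1) * (D (k+1) * chainWD a W D k)

section Aux

variable (a : ℕ → ℕ) (W : ∀ r : ℕ, Matrix (Fin (a (r+1))) (Fin (a r)) ℝ)

lemma Wchunk_apply_congr (s : ℕ) {k k' : ℕ} (h : k = k')
    {i : Fin (a (s+k+1))} {i' : Fin (a (s+k'+1))} (hi : (i : ℕ) = (i' : ℕ)) (j : Fin (a s)) :
    Wchunk a W s k i j = Wchunk a W s k' i' j := by
  subst h
  cases Fin.ext hi
  rfl

lemma Wts_eq (s n : ℕ) : Wts a W s (s+n+1) = Wchunk a W s n := by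
  ext i j
  rw [Wts, dif_pos (by omega : s < s+n+1)]
  exact Wchunk_apply_congr a W s (by omega : s+n+1-s-1 = n) rfl j

lemma Wts_self (s : ℕ) : Wts a W s (s+1) = W s :=
  Wts_eq a W s 0

lemma Wts_step (s n : ℕ) : Wts a W s (s+n+1+1) = W (s+n+1) * Wts a W s (s+n+1) := by
  calc Wts a W s (s+n+1+1) = Wchunk a W s (n+1) := Wts_eq a W s (n+1)
    _ = W (s+n+1) * Wchunk a W s n := rfl
    _ = W (s+n+1) * Wts a W s (s+n+1) := by rw [Wts_eq a W s n]

lemma Wts_succ {s t : ℕ} (h : s < t) : Wts a W s (t+1) = W t * Wts a W s t := by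
  obtain ⟨n, rfl⟩ : ∃ n, t = s + n + 1 := ⟨t - s - 1, by omega⟩
  exact Wts_step a W s n

/-- Product with `Z`-factors at cut points. -/
noncomputable def ZchunkProd (Z : ∀ r : ℕ, Matrix (Fin (a r)) (Fin (a r)) ℝ) :
    (t : ℕ) → List ℕ → Matrix (Fin (a t)) (Fin (a 0)) ℝ
  | t, [] => Wts a W 0 t
  | t, r :: rest => Wts a W r t * (Z r * ZchunkProd Z r rest)

lemma Zchunk_step (Z : ∀ r : ℕ, Matrix (Fin (a r)) (Fin (a r)) ℝ) (t : ℕ) (L : List ℕ)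
    (ht : 0 < t) (hL : ∀ r ∈ L, r < t) :
    ZchunkProd a W Z (t+1) L = W t * ZchunkProd a W Z t L := by
  cases L with
  | nil => exact Wts_succ a W ht
  | cons r rest =>
    show Wts a W r (t+1) * _ = W t * (Wts a W r t * _)
    rw [Wts_succ a W (hL r (by simp)), Matrix.mul_assoc]

lemma Icc_insert_top (ℓ : ℕ) : Finset.Icc 1 (ℓ+1) = insert (ℓ+1) (Finset.Icc 1 ℓ) := by
  ext x; simp [Finset.mem_Icc]; omega

lemma sortrev_insert {ℓ : ℕ} {S : Finset ℕ} (hS : S ⊆ Finset.Icc 1 ℓ) :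
    ((insert (ℓ+1) S).sort (· ≤ ·)).reverse = (ℓ+1) :: (S.sort (· ≤ ·)).reverse := by
  have hnot : (ℓ+1) ∉ S := fun h => by
    have := Finset.mem_Icc.1 (hS h); omega
  have hsort : (insert (ℓ+1) S).sort (· ≤ ·) = S.sort (· ≤ ·) ++ [ℓ+1] := by
    refine List.Perm.eq_of_pairwise' (r := (· ≤ ·)) (Finset.pairwise_sort _ _) ?_ ?_
    swap
    · exact (Finset.sort_perm_toList _ _).trans ((Finset.toList_insert hnot).trans
        ((List.Perm.cons _ (Finset.sort_perm_toList _ _).symm).trans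
          (List.perm_append_singleton _ _).symm))
    · refine List.pairwise_append.2 ⟨Finset.pairwise_sort _ _, List.pairwise_singleton _ _,
        fun x hx y hy => ?_⟩
      simp only [List.mem_singleton] at hy
      subst hy
      have := Finset.mem_Icc.1 (hS ((Finset.mem_sort _).1 hx))
      omega
  rw [hsort, List.reverse_append]
  simp

lemma sum_Zchunk_eq (D : ∀ r : ℕ, Matrix (Fin (a r)) (Fin (a r)) ℝ) (ℓ : ℕ) :
    ∑ S ∈ (Finset.Icc 1 ℓ).powerset,
      ZchunkProd a W (fun r => (2:ℝ) • D r - 1) (ℓ+1) ((S.sort (· ≤ ·)).reverse)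
      = (2^ℓ : ℝ) • chainWD a W D ℓ := by
  induction ℓ with
  | zero =>
    rw [show Finset.Icc 1 0 = (∅ : Finset ℕ) from Finset.Icc_eq_empty (by omega)]
    simp only [Finset.powerset_empty, Finset.sum_singleton, Finset.sort_empty,
      List.reverse_nil, pow_zero, one_smul]
    show Wts a W 0 1 = chainWD a W D 0
    exact Wts_self a W 0
  | succ ℓ ih =>
    have hnotmem : ∀ S ∈ (Finset.Icc 1 ℓ).powerset, (ℓ+1) ∉ S := fun S hS h => by
      have := Finset.mem_Icc.1 (Finset.mem_powerset.1 hS h); omega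
    rw [Icc_insert_top, Finset.powerset_insert, Finset.sum_union, Finset.sum_image]
    · have h1 : ∀ S ∈ (Finset.Icc 1 ℓ).powerset,
          ZchunkProd a W (fun r => (2:ℝ) • D r - 1) (ℓ+1+1) ((S.sort (· ≤ ·)).reverse)
          = W (ℓ+1) * ZchunkProd a W (fun r => (2:ℝ) • D r - 1) (ℓ+1) ((S.sort (· ≤ ·)).reverse) := by
        intro S hS
        refine Zchunk_step a W _ _ _ (by omega) (fun r hr => ?_)
        have : r ∈ S := (Finset.mem_sort _).1 (List.mem_reverse.1 hr)
        have := Finset.mem_Icc.1 (Finset.mem_powerset.1 hS this); omega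
      have h2 : ∀ S ∈ (Finset.Icc 1 ℓ).powerset,
          ZchunkProd a W (fun r => (2:ℝ) • D r - 1) (ℓ+1+1)
              (((insert (ℓ+1) S).sort (· ≤ ·)).reverse)
          = W (ℓ+1) * (((2:ℝ) • D (ℓ+1) - 1) *
              ZchunkProd a W (fun r => (2:ℝ) • D r - 1) (ℓ+1) ((S.sort (· ≤ ·)).reverse)) := by
        intro S hS
        rw [sortrev_insert (Finset.mem_powerset.1 hS)]
        simp only [ZchunkProd]
        rw [Wts_self a W (ℓ+1)]
      rw [Finset.sum_congr rfl h1, Finset.sum_congr rfl h2,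
        ← Matrix.mul_sum, ← Matrix.mul_sum, ← Matrix.mul_add, ← Matrix.mul_sum, ih]
      have : (2^ℓ : ℝ) • chainWD a W D ℓ +
          ((2:ℝ) • D (ℓ+1) - 1) * ((2^ℓ : ℝ) • chainWD a W D ℓ)
          = (2:ℝ) • (D (ℓ+1) * ((2^ℓ : ℝ) • chainWD a W D ℓ)) := by
        rw [Matrix.sub_mul, Matrix.smul_mul, Matrix.one_mul]
        abel
      rw [this]
      show _ = (2^(ℓ+1) : ℝ) • (W (ℓ+1) * (D (ℓ+1) * chainWD a W D ℓ))
      rw [Matrix.mul_smul, Matrix.mul_smul, Matrix.mul_smul, smul_smul]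
      rw [show (2:ℝ) * 2^ℓ = 2^(ℓ+1) from by ring]
    · intro S hS T hT hST
      have : (ℓ+1) ∉ S := hnotmem S hS
      have hT' : (ℓ+1) ∉ T := hnotmem T hT
      rw [← Finset.erase_insert this, ← Finset.erase_insert hT', hST]
    · rw [Finset.disjoint_left]
      intro S hS hS'
      obtain ⟨T, hT, rfl⟩ := Finset.mem_image.1 hS'
      exact hnotmem _ hS (Finset.mem_insert_self _ _)

lemma chunkAbsProd_nonneg : ∀ (L : List ℕ) (t : ℕ) (i : Fin (a t)) (j : Fin (a 0)),
    0 ≤ chunkAbsProd a W t L i j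
  | [], t, i, j => abs_nonneg _
  | r :: rest, t, i, j => by
    show 0 ≤ ∑ k, entAbs (Wts a W r t) i k * chunkAbsProd a W r rest k j
    exact Finset.sum_nonneg fun k _ =>
      mul_nonneg (abs_nonneg _) (chunkAbsProd_nonneg rest r k j)

lemma Zchunk_abs_le (Z : ∀ r : ℕ, Matrix (Fin (a r)) (Fin (a r)) ℝ)
    (hZd : ∀ r i, |Z r i i| ≤ 1) (hZ0 : ∀ r (i j : Fin (a r)), i ≠ j → Z r i j = 0) :
    ∀ (L : List ℕ) (t : ℕ) (i : Fin (a t)) (j : Fin (a 0)),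
      |ZchunkProd a W Z t L i j| ≤ chunkAbsProd a W t L i j
  | [], t, i, j => le_of_eq rfl
  | r :: rest, t, i, j => by
    show |∑ k, Wts a W r t i k * (Z r * ZchunkProd a W Z r rest) k j| ≤
      ∑ k, entAbs (Wts a W r t) i k * chunkAbsProd a W r rest k j
    refine le_trans (Finset.abs_sum_le_sum_abs _ _) (Finset.sum_le_sum fun k _ => ?_)
    have hz : (Z r * ZchunkProd a W Z r rest) k j = Z r k k * ZchunkProd a W Z r rest k j := by
      rw [Matrix.mul_apply]
      exact Finset.sum_eq_single k (fun m _ hm => by rw [hZ0 r k m (Ne.symm hm), zero_mul])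
        (fun h => absurd (Finset.mem_univ k) h)
    rw [hz, abs_mul, abs_mul]
    refine mul_le_mul_of_nonneg_left ?_ (abs_nonneg _)
    calc |Z r k k| * |ZchunkProd a W Z r rest k j|
        ≤ 1 * chunkAbsProd a W r rest k j := by
          refine mul_le_mul (hZd r k) (Zchunk_abs_le Z hZd hZ0 rest r k j)
            (abs_nonneg _) zero_le_one
      _ = chunkAbsProd a W r rest k j := one_mul _

end Aux

section Norms

variable {m n p : ℕ}

lemma l1N_nonneg (A : Matrix (Fin m) (Fin n) ℝ) : 0 ≤ l1N A :=
  Real.iSup_nonneg fun _ => Finset.sum_nonneg fun _ _ => abs_nonneg _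

lemma linfN_nonneg (A : Matrix (Fin m) (Fin n) ℝ) : 0 ≤ linfN A :=
  Real.iSup_nonneg fun _ => Finset.sum_nonneg fun _ _ => abs_nonneg _

lemma colsum_le_l1N (A : Matrix (Fin m) (Fin n) ℝ) (j : Fin n) :
    ∑ i, |A i j| ≤ l1N A :=
  le_ciSup (f := fun j => ∑ i, |A i j|) (Set.Finite.bddAbove (Set.finite_range _)) j

lemma rowsum_le_linfN (A : Matrix (Fin m) (Fin n) ℝ) (i : Fin m) :
    ∑ j, |A i j| ≤ linfN A :=
  le_ciSup (f := fun i => ∑ j, |A i j|) (Set.Finite.bddAbove (Set.finite_range _)) i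

lemma l1N_le {A : Matrix (Fin m) (Fin n) ℝ} {c : ℝ} (h : ∀ j, ∑ i, |A i j| ≤ c)
    (hc : 0 ≤ c) : l1N A ≤ c :=
  Real.iSup_le h hc

lemma linfN_le {A : Matrix (Fin m) (Fin n) ℝ} {c : ℝ} (h : ∀ i, ∑ j, |A i j| ≤ c)
    (hc : 0 ≤ c) : linfN A ≤ c :=
  Real.iSup_le h hc

lemma l1N_entAbs (A : Matrix (Fin m) (Fin n) ℝ) : l1N (entAbs A) = l1N A := by
  simp [l1N, entAbs, abs_abs]

lemma linfN_entAbs (A : Matrix (Fin m) (Fin n) ℝ) : linfN (entAbs A) = linfN A := by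
  simp [linfN, entAbs, abs_abs]

lemma l1N_mul_le (A : Matrix (Fin m) (Fin n) ℝ) (B : Matrix (Fin n) (Fin p) ℝ) :
    l1N (A * B) ≤ l1N A * l1N B := by
  refine l1N_le (fun j => ?_) (mul_nonneg (l1N_nonneg A) (l1N_nonneg B))
  calc ∑ i, |(A * B) i j| ≤ ∑ i, ∑ k, |A i k| * |B k j| := by
        refine Finset.sum_le_sum fun i _ => ?_
        rw [Matrix.mul_apply]
        refine le_trans (Finset.abs_sum_le_sum_abs _ _) ?_
        exact le_of_eq (Finset.sum_congr rfl fun k _ => abs_mul _ _)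
    _ = ∑ k, (∑ i, |A i k|) * |B k j| := by
        rw [Finset.sum_comm]
        exact Finset.sum_congr rfl fun k _ => (Finset.sum_mul _ _ _).symm
    _ ≤ ∑ k, l1N A * |B k j| :=
        Finset.sum_le_sum fun k _ =>
          mul_le_mul_of_nonneg_right (colsum_le_l1N A k) (abs_nonneg _)
    _ = l1N A * ∑ k, |B k j| := (Finset.mul_sum _ _ _).symm
    _ ≤ l1N A * l1N B :=
        mul_le_mul_of_nonneg_left (colsum_le_l1N B j) (l1N_nonneg A)

lemma linfN_mul_le (A : Matrix (Fin m) (Fin n) ℝ) (B : Matrix (Fin n) (Fin p) ℝ) :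
    linfN (A * B) ≤ linfN A * linfN B := by
  refine linfN_le (fun i => ?_) (mul_nonneg (linfN_nonneg A) (linfN_nonneg B))
  calc ∑ j, |(A * B) i j| ≤ ∑ j, ∑ k, |A i k| * |B k j| := by
        refine Finset.sum_le_sum fun j _ => ?_
        rw [Matrix.mul_apply]
        refine le_trans (Finset.abs_sum_le_sum_abs _ _) ?_
        exact le_of_eq (Finset.sum_congr rfl fun k _ => abs_mul _ _)
    _ = ∑ k, |A i k| * ∑ j, |B k j| := by
        rw [Finset.sum_comm]
        exact Finset.sum_congr rfl fun k _ => (Finset.mul_sum _ _ _).symm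
    _ ≤ ∑ k, |A i k| * linfN B :=
        Finset.sum_le_sum fun k _ =>
          mul_le_mul_of_nonneg_left (rowsum_le_linfN B k) (abs_nonneg _)
    _ = (∑ k, |A i k|) * linfN B := (Finset.sum_mul _ _ _).symm
    _ ≤ linfN A * linfN B :=
        mul_le_mul_of_nonneg_right (rowsum_le_linfN A i) (linfN_nonneg B)

end Norms

section ChunkNorm

variable (a : ℕ → ℕ) (W : ∀ r : ℕ, Matrix (Fin (a (r+1))) (Fin (a r)) ℝ)

lemma l1N_chunkAbs_le : ∀ (L : List ℕ) (t : ℕ),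
    l1N (chunkAbsProd a W t L) ≤ chunkNormProd a W (fun _ _ A => l1N A) t L
  | [], t => le_of_eq (l1N_entAbs _)
  | r :: rest, t => by
    show l1N (entAbs (Wts a W r t) * chunkAbsProd a W r rest) ≤
      l1N (Wts a W r t) * chunkNormProd a W (fun _ _ A => l1N A) r rest
    refine le_trans (l1N_mul_le _ _) ?_
    rw [l1N_entAbs]
    exact mul_le_mul_of_nonneg_left (l1N_chunkAbs_le rest r) (l1N_nonneg _)

lemma linfN_chunkAbs_le : ∀ (L : List ℕ) (t : ℕ),
    linfN (chunkAbsProd a W t L) ≤ chunkNormProd a W (fun _ _ A => linfN A) t L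
  | [], t => le_of_eq (linfN_entAbs _)
  | r :: rest, t => by
    show linfN (entAbs (Wts a W r t) * chunkAbsProd a W r rest) ≤
      linfN (Wts a W r t) * chunkNormProd a W (fun _ _ A => linfN A) r rest
    refine le_trans (linfN_mul_le _ _) ?_
    rw [linfN_entAbs]
    exact mul_le_mul_of_nonneg_left (linfN_chunkAbs_le rest r) (linfN_nonneg _)

end ChunkNorm

/-- In the l¹ or l∞ operator norm, `K ≤ K₄ ≤ K₁`: the norm of
`W ℓ D ℓ ⋯ D 1 W 0` (for any diagonal `D r` with entries in `[0,1]`) is bounded by `K₄`,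
and `K₄` is bounded by the Combettes–Pesquet bound `K₁`. -/
theorem K_le_K4_le_K1
    (a : ℕ → ℕ) (ℓ : ℕ) (W : ∀ r : ℕ, Matrix (Fin (a (r+1))) (Fin (a r)) ℝ)
    (D : ∀ r : ℕ, Matrix (Fin (a r)) (Fin (a r)) ℝ)
    (hD0 : ∀ r i j, i ≠ j → D r i j = 0)
    (hD1 : ∀ r i, D r i i ∈ Set.Icc (0:ℝ) 1) :
    (l1N (chainWD a W D ℓ) ≤ K4 a W (fun _ _ A => l1N A) ℓ ∧
      K4 a W (fun _ _ A => l1N A) ℓ ≤ K1 a W (fun _ _ A => l1N A) ℓ) ∧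
    (linfN (chainWD a W D ℓ) ≤ K4 a W (fun _ _ A => linfN A) ℓ ∧
      K4 a W (fun _ _ A => linfN A) ℓ ≤ K1 a W (fun _ _ A => linfN A) ℓ) := by
  
  have hZd : ∀ r i, |((2:ℝ) • D r - 1) i i| ≤ 1 := by
    intro r i
    have h := hD1 r i
    simp only [Matrix.sub_apply, Matrix.smul_apply, Matrix.one_apply_eq, smul_eq_mul]
    rw [abs_le]
    exact ⟨by linarith [h.1], by linarith [h.2]⟩
  have hZ0 : ∀ r (i j : Fin (a r)), i ≠ j → ((2:ℝ) • D r - 1) i j = 0 := by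
    intro r i j hij
    simp [Matrix.sub_apply, Matrix.smul_apply, Matrix.one_apply_ne hij, hD0 r i j hij]
  have hkey : ∀ (i : Fin (a (ℓ+1))) (j : Fin (a 0)),
      (2^ℓ : ℝ) * |chainWD a W D ℓ i j| ≤
      ∑ S ∈ (Finset.Icc 1 ℓ).powerset,
        chunkAbsProd a W (ℓ+1) ((S.sort (· ≤ ·)).reverse) i j := by
    intro i j
    have h2 : ∑ S ∈ (Finset.Icc 1 ℓ).powerset,
        ZchunkProd a W (fun r => (2:ℝ) • D r - 1) (ℓ+1) ((S.sort (· ≤ ·)).reverse) i j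
        = (2^ℓ : ℝ) * chainWD a W D ℓ i j := by
      have h := congrFun (congrFun (sum_Zchunk_eq a W D ℓ) i) j
      simpa [Matrix.sum_apply, Matrix.smul_apply, smul_eq_mul] using h
    calc (2^ℓ : ℝ) * |chainWD a W D ℓ i j|
        = |∑ S ∈ (Finset.Icc 1 ℓ).powerset,
            ZchunkProd a W (fun r => (2:ℝ) • D r - 1) (ℓ+1) ((S.sort (· ≤ ·)).reverse) i j| := by
          rw [h2, abs_mul, abs_of_nonneg (by positivity : (0:ℝ) ≤ 2^ℓ)]
      _ ≤ ∑ S ∈ (Finset.Icc 1 ℓ).powerset,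
            chunkAbsProd a W (ℓ+1) ((S.sort (· ≤ ·)).reverse) i j :=
          le_trans (Finset.abs_sum_le_sum_abs _ _)
            (Finset.sum_le_sum fun S _ =>
              Zchunk_abs_le a W (fun r => (2:ℝ) • D r - 1) hZd hZ0 _ _ i j)
  have h2p : (0:ℝ) < 2^ℓ := by positivity
  refine ⟨⟨?_, ?_⟩, ⟨?_, ?_⟩⟩
  · -- l1N chain ≤ K4
    have hsum1 : ∀ j : Fin (a 0), (2^ℓ:ℝ) * ∑ i, |chainWD a W D ℓ i j| ≤
        ∑ S ∈ (Finset.Icc 1 ℓ).powerset,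
          l1N (chunkAbsProd a W (ℓ+1) ((S.sort (· ≤ ·)).reverse)) := by
      intro j
      rw [Finset.mul_sum]
      refine le_trans (Finset.sum_le_sum fun i _ => hkey i j) ?_
      rw [Finset.sum_comm]
      refine Finset.sum_le_sum fun S _ => ?_
      calc ∑ i, chunkAbsProd a W (ℓ+1) ((S.sort (· ≤ ·)).reverse) i j
          = ∑ i, |chunkAbsProd a W (ℓ+1) ((S.sort (· ≤ ·)).reverse) i j| :=
            Finset.sum_congr rfl fun i _ =>
              (abs_of_nonneg (chunkAbsProd_nonneg a W _ _ i j)).symm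
        _ ≤ l1N _ := colsum_le_l1N _ j
    have hnn : 0 ≤ ∑ S ∈ (Finset.Icc 1 ℓ).powerset,
        l1N (chunkAbsProd a W (ℓ+1) ((S.sort (· ≤ ·)).reverse)) :=
      Finset.sum_nonneg fun S _ => l1N_nonneg _
    show l1N (chainWD a W D ℓ) ≤ (1 / 2 ^ ℓ) * ∑ S ∈ (Finset.Icc 1 ℓ).powerset,
      l1N (chunkAbsProd a W (ℓ+1) ((S.sort (· ≤ ·)).reverse))
    refine l1N_le (fun j => ?_) (mul_nonneg (by positivity) hnn)
    calc ∑ i, |chainWD a W D ℓ i j|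
        = (1/2^ℓ) * ((2^ℓ:ℝ) * ∑ i, |chainWD a W D ℓ i j|) := by field_simp
      _ ≤ (1/2^ℓ) * ∑ S ∈ (Finset.Icc 1 ℓ).powerset,
            l1N (chunkAbsProd a W (ℓ+1) ((S.sort (· ≤ ·)).reverse)) :=
          mul_le_mul_of_nonneg_left (hsum1 j) (by positivity)
  · -- K4 ≤ K1 (l1)
    show (1 / 2 ^ ℓ : ℝ) * _ ≤ (1 / 2 ^ ℓ) * _
    refine mul_le_mul_of_nonneg_left ?_ (by positivity)
    exact Finset.sum_le_sum fun S _ => l1N_chunkAbs_le a W _ _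
  · -- linfN chain ≤ K4
    have hsum1 : ∀ i : Fin (a (ℓ+1)), (2^ℓ:ℝ) * ∑ j, |chainWD a W D ℓ i j| ≤
        ∑ S ∈ (Finset.Icc 1 ℓ).powerset,
          linfN (chunkAbsProd a W (ℓ+1) ((S.sort (· ≤ ·)).reverse)) := by
      intro i
      rw [Finset.mul_sum]
      refine le_trans (Finset.sum_le_sum fun j _ => hkey i j) ?_
      rw [Finset.sum_comm]
      refine Finset.sum_le_sum fun S _ => ?_
      calc ∑ j, chunkAbsProd a W (ℓ+1) ((S.sort (· ≤ ·)).reverse) i j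
          = ∑ j, |chunkAbsProd a W (ℓ+1) ((S.sort (· ≤ ·)).reverse) i j| :=
            Finset.sum_congr rfl fun j _ =>
              (abs_of_nonneg (chunkAbsProd_nonneg a W _ _ i j)).symm
        _ ≤ linfN _ := rowsum_le_linfN _ i
    have hnn : 0 ≤ ∑ S ∈ (Finset.Icc 1 ℓ).powerset,
        linfN (chunkAbsProd a W (ℓ+1) ((S.sort (· ≤ ·)).reverse)) :=
      Finset.sum_nonneg fun S _ => linfN_nonneg _
    show linfN (chainWD a W D ℓ) ≤ (1 / 2 ^ ℓ) * ∑ S ∈ (Finset.Icc 1 ℓ).powerset,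
      linfN (chunkAbsProd a W (ℓ+1) ((S.sort (· ≤ ·)).reverse))
    refine linfN_le (fun i => ?_) (mul_nonneg (by positivity) hnn)
    calc ∑ j, |chainWD a W D ℓ i j|
        = (1/2^ℓ) * ((2^ℓ:ℝ) * ∑ j, |chainWD a W D ℓ i j|) := by field_simp
      _ ≤ (1/2^ℓ) * ∑ S ∈ (Finset.Icc 1 ℓ).powerset,
            linfN (chunkAbsProd a W (ℓ+1) ((S.sort (· ≤ ·)).reverse)) :=
          mul_le_mul_of_nonneg_left (hsum1 i) (by positivity)
  · -- K4 ≤ K1 (linf)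
    show (1 / 2 ^ ℓ : ℝ) * _ ≤ (1 / 2 ^ ℓ) * _
    refine mul_le_mul_of_nonneg_left ?_ (by positivity)
    exact Finset.sum_le_sum fun S _ => linfN_chunkAbs_le a W _ _
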